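/- For the lazy random walk on a finite connected weighted graph and its spectral decomposition, if μ*_x(λ) := ∑_{k: 0<λ_k ≤ λ} |g_k(x)|² (the vertex spectral measure minus the atom at 0) satisfies μ*_x(λ) ≤ ψ(λ) for an increasing continuously differentiable function ψ with ψ(0)=0, then for every t ≥ 1, p_t(x,x) − π(x) ≤ ∫₀² (1 − λ/2)^t ψ'(λ) dλ. -/

import Mathlib

set_option maxHeartbeats 1000000

open MeasureTheory intervalIntegral Set

section StmtAux

lemma indic_intable (h : ℝ → ℝ) (hc : Continuous h) (a : ℝ) :
    IntervalIntegrable (fun s => if a ≤ s then h s else 0) MeasureTheory.volume 0 2 := by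
  have e : (fun s => if a ≤ s then h s else 0) = Set.indicator (Set.Ici a) h := by
    funext s; simp [Set.indicator_apply, Set.mem_Ici]
  rw [e, intervalIntegrable_iff]
  exact (hc.integrableOn_uIcc.mono_set Set.Ioc_subset_Icc_self).indicator measurableSet_Ici

lemma indic_int (h : ℝ → ℝ) (hc : Continuous h) (a : ℝ) (ha0 : 0 ≤ a) (ha2 : a ≤ 2) :
    ∫ s in (0:ℝ)..2, (if a ≤ s then h s else 0) = ∫ s in a..2, h s := by
  have hint := indic_intable h hc a
  have h1 : IntervalIntegrable (fun s => if a ≤ s then h s else 0) MeasureTheory.volume 0 a := by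
    apply hint.mono_set
    rw [Set.uIcc_of_le ha0, Set.uIcc_of_le (by norm_num : (0:ℝ) ≤ 2)]
    exact Set.Icc_subset_Icc le_rfl ha2
  have h2 : IntervalIntegrable (fun s => if a ≤ s then h s else 0) MeasureTheory.volume a 2 := by
    apply hint.mono_set
    rw [Set.uIcc_of_le ha2, Set.uIcc_of_le (by norm_num : (0:ℝ) ≤ 2)]
    exact Set.Icc_subset_Icc ha0 le_rfl
  rw [← intervalIntegral.integral_add_adjacent_intervals h1 h2]
  have e1 : ∫ s in (0:ℝ)..a, (if a ≤ s then h s else 0) = 0 := by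
    rw [intervalIntegral.integral_congr_ae (g := fun _ => (0:ℝ)) ?_, intervalIntegral.integral_zero]
    have hae : ∀ᵐ s : ℝ, s ≠ a := by
      have : (volume : Measure ℝ) {a} = 0 := measure_singleton a
      exact MeasureTheory.compl_mem_ae_iff.mpr this
    filter_upwards [hae] with s hs hmem
    rw [Set.uIoc_of_le ha0] at hmem
    rw [if_neg (not_le.mpr (lt_of_le_of_ne hmem.2 hs))]
  have e2 : ∫ s in a..(2:ℝ), (if a ≤ s then h s else 0) = ∫ s in a..2, h s := by
    apply intervalIntegral.integral_congr
    intro s hs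
    rw [Set.uIcc_of_le ha2] at hs
    simp only [if_pos hs.1]
  rw [e1, e2, zero_add]


lemma spectral_int {n : ℕ} (t : ℕ) (ht : 1 ≤ t) (c : Fin n → ℝ) (μ : Fin n → ℝ)
    (S : Finset (Fin n))
    (hc : ∀ i ∈ S, 0 ≤ c i) (h0 : ∀ i ∈ S, 0 ≤ μ i) (h2 : ∀ i ∈ S, μ i ≤ 2)
    (ψ ψ' : ℝ → ℝ)
    (hderiv : ∀ s, HasDerivAt ψ (ψ' s) s) (hcont : Continuous ψ') (hψ0 : ψ 0 = 0)
    (hbound : ∀ s ∈ Set.Icc (0:ℝ) 2, (∑ i ∈ S, if μ i ≤ s then c i else 0) ≤ ψ s) :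
    (∑ i ∈ S, (1 - μ i / 2) ^ t * c i) ≤ ∫ s in (0:ℝ)..2, (1 - s/2)^t * ψ' s := by
  set h : ℝ → ℝ := fun s => (t : ℝ) * (1 - s/2)^(t-1) / 2 with hh
  have hch : Continuous h := by
    apply Continuous.div_const
    exact continuous_const.mul ((continuous_const.sub (continuous_id.div_const 2)).pow _)
  have hψc : Continuous ψ := by
    rw [continuous_iff_continuousAt]; exact fun s => (hderiv s).continuousAt
  have hu : ∀ s : ℝ, HasDerivAt (fun s : ℝ => (1 - s/2)^t) (-(h s)) s := by
    intro s
    have inner : HasDerivAt (fun s : ℝ => 1 - s/2) (-(1/2)) s := by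
      simpa using ((hasDerivAt_id s).div_const 2).const_sub 1
    have base := inner.pow t
    refine HasDerivAt.congr_deriv base ?_
    simp only [hh]; ring
  have hftc : ∀ a : ℝ, ∫ s in a..2, h s = (1 - a/2)^t := by
    intro a
    have hu' : ∀ s ∈ Set.uIcc a 2, HasDerivAt (fun s : ℝ => -((1 - s/2)^t)) (h s) s :=
      fun s _ => by have := (hu s).neg; rw [neg_neg] at this; exact this
    have := intervalIntegral.integral_eq_sub_of_hasDerivAt hu' (hch.intervalIntegrable a 2)
    rw [this]
    norm_num
    omega
  have hint : ∀ i : Fin n, IntervalIntegrable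
      (fun s => if μ i ≤ s then c i * h s else 0) MeasureTheory.volume 0 2 := by
    intro i
    have e1 : (fun s => if μ i ≤ s then c i * h s else 0)
        = fun s => c i * (if μ i ≤ s then h s else 0) := by
      funext s; by_cases hs : μ i ≤ s <;> simp [hs]
    rw [e1]
    exact (indic_intable h hch (μ i)).const_mul _
  -- each term as an integral
  have per : ∀ i ∈ S, (1 - μ i / 2) ^ t * c i
      = ∫ s in (0:ℝ)..2, (if μ i ≤ s then c i * h s else 0) := by
    intro i hi
    have e1 : (fun s => if μ i ≤ s then c i * h s else 0)
        = fun s => c i * (if μ i ≤ s then h s else 0) := by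
      funext s; by_cases hs : μ i ≤ s <;> simp [hs]
    rw [e1, intervalIntegral.integral_const_mul, indic_int h hch (μ i) (h0 i hi) (h2 i hi),
      hftc (μ i)]
    ring
  rw [Finset.sum_congr rfl per,
    ← intervalIntegral.integral_finset_sum (fun i _ => hint i)]
  -- now bound the integrand by ψ * h
  have hmain : ∫ s in (0:ℝ)..2, (∑ i ∈ S, if μ i ≤ s then c i * h s else 0)
      ≤ ∫ s in (0:ℝ)..2, ψ s * h s := by
    apply intervalIntegral.integral_mono_on (by norm_num)
    · have := IntervalIntegrable.sum S (fun i _ => hint i)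
      have e : (∑ i ∈ S, fun s => if μ i ≤ s then c i * h s else 0)
          = fun u => ∑ i ∈ S, if μ i ≤ u then c i * h u else 0 := by
        funext u; simp [Finset.sum_apply]
      rwa [e] at this
    · exact (hψc.mul hch).intervalIntegrable 0 2
    · intro s hs
      have hnn : 0 ≤ h s := by
        rw [hh]
        apply div_nonneg _ (by norm_num)
        apply mul_nonneg (by positivity)
        apply pow_nonneg
        linarith [hs.2]
      have e : (∑ i ∈ S, if μ i ≤ s then c i * h s else 0)
          = (∑ i ∈ S, if μ i ≤ s then c i else 0) * h s := by
        rw [Finset.sum_mul]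
        apply Finset.sum_congr rfl
        intro i _
        by_cases hsi : μ i ≤ s <;> simp [hsi]
      rw [e]
      exact mul_le_mul_of_nonneg_right (hbound s hs) hnn
  refine hmain.trans (le_of_eq ?_)
  -- integration by parts
  have := intervalIntegral.integral_mul_deriv_eq_deriv_mul
    (u := fun s : ℝ => (1 - s/2)^t) (u' := fun s => -(h s)) (v := ψ) (v' := ψ')
    (fun s _ => hu s) (fun s _ => hderiv s)
    ((hch.neg).intervalIntegrable 0 2) (hcont.intervalIntegrable 0 2)
  rw [this]
  have e0 : ((fun s : ℝ => (1 - s/2)^t) 2) = 0 := by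
    norm_num [zero_pow (show t ≠ 0 by omega)]
  have e1 : ((fun s : ℝ => (1 - s/2)^t) 0) = 1 := by norm_num
  rw [show (1 - (2:ℝ)/2)^t = 0 from e0, show (1 - (0:ℝ)/2)^t = 1 from e1, hψ0]
  have e2 : ∫ x in (0:ℝ)..2, (fun s => -h s) x * ψ x = - ∫ x in (0:ℝ)..2, ψ x * h x := by
    rw [← intervalIntegral.integral_neg]
    apply intervalIntegral.integral_congr
    intro s _
    ring
  rw [e2]
  ring

end StmtAux


/-- The normalized Laplacian `I - D^{-1/2} A D^{-1/2}` of the weighted graph `W`. -/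
noncomputable def normLap {n : ℕ} (W : Matrix (Fin n) (Fin n) ℝ) :
    Matrix (Fin n) (Fin n) ℝ :=
  Matrix.of fun x y =>
    (if x = y then (1 : ℝ) else 0) -
      W x y / (Real.sqrt (∑ z, W x z) * Real.sqrt (∑ z, W y z))

/-- Transition matrix `P = (I + D⁻¹A)/2` of the lazy random walk. -/
noncomputable def lazyP {n : ℕ} (W : Matrix (Fin n) (Fin n) ℝ) :
    Matrix (Fin n) (Fin n) ℝ :=
  Matrix.of fun x y => ((if x = y then (1 : ℝ) else 0) + W x y / (∑ z, W x z)) / 2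

/-- If the vertex spectral measure `μ*_x(λ) = ∑_{k : 0 < λ_k ≤ λ} g_k(x)²` is bounded by an
increasing continuously differentiable `ψ` with `ψ(0) = 0`, then
`p_t(x,x) - π(x) ≤ ∫₀² (1-λ/2)^t ψ'(λ) dλ`. -/
theorem stmt14 {n : ℕ} [NeZero n] (W : Matrix (Fin n) (Fin n) ℝ)
    (hsym : ∀ x y, W x y = W y x) (hnn : ∀ x y, 0 ≤ W x y) (hloop : ∀ x, W x x = 0)
    (hconn : (SimpleGraph.fromRel fun x y => W x y ≠ 0).Connected)
    (mu : Fin n → ℝ) (g : Fin n → Fin n → ℝ)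
    (hg0 : ∀ x, g 0 x = Real.sqrt ((∑ z, W x z) / (∑ u, ∑ z, W u z)))
    (hmu0 : mu 0 = 0)
    (hmunz : ∀ i, i ≠ 0 → mu i ≠ 0)
    (heig : ∀ i, (normLap W).mulVec (g i) = mu i • g i)
    (horth : ∀ i j, (∑ x, g i x * g j x) = if i = j then (1 : ℝ) else 0)
    (x : Fin n)
    (ψ ψ' : ℝ → ℝ)
    (hderiv : ∀ s, HasDerivAt ψ (ψ' s) s)
    (hcont : Continuous ψ')
    (hmono : Monotone ψ)
    (hψ0 : ψ 0 = 0)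
    (hbound : ∀ s ∈ Set.Icc (0 : ℝ) 2,
      (∑ i ∈ Finset.univ.erase 0, if mu i ≤ s then g i x ^ 2 else 0) ≤ ψ s) :
    ∀ t : ℕ, 1 ≤ t →
      (lazyP W ^ t) x x - (∑ z, W x z) / (∑ u, ∑ z, W u z) ≤
        ∫ s in (0 : ℝ)..2, (1 - s / 2) ^ t * ψ' s := by
  intro t ht
  -- degree positivity
  have hd : ∀ y, 0 < ∑ z, W y z := by
    intro y
    rcases (Finset.sum_nonneg (fun z _ => hnn y z)).lt_or_eq with h | h
    · exact h
    exfalso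
    have hWy : ∀ z, W y z = 0 := fun z =>
      (Finset.sum_eq_zero_iff_of_nonneg (fun z _ => hnn y z)).mp h.symm z (Finset.mem_univ z)
    by_cases hex : ∃ z : Fin n, z ≠ y
    · obtain ⟨z, hz⟩ := hex
      obtain ⟨w⟩ := hconn.preconnected y z
      cases w with
      | nil => exact hz rfl
      | cons ha p =>
        rw [SimpleGraph.fromRel_adj] at ha
        rcases ha.2 with h' | h'
        · exact h' (hWy _)
        · exact h' ((hsym _ _).trans (hWy _))
    · push_neg at hex
      have h1 : g 0 y = 0 := by
        rw [hg0, ← h]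
        simp
      have h2 := horth 0 0
      rw [if_pos rfl] at h2
      have h3 : (∑ u : Fin n, g 0 u * g 0 u) = 0 := by
        apply Finset.sum_eq_zero
        intro u _
        rw [hex u, h1, mul_zero]
      rw [h3] at h2
      norm_num at h2
  have hsd : ∀ y, (0:ℝ) < Real.sqrt (∑ z, W y z) := fun y => Real.sqrt_pos.mpr (hd y)
  have hsd2 : ∀ y, Real.sqrt (∑ z, W y z) * Real.sqrt (∑ z, W y z) = ∑ z, W y z :=
    fun y => Real.mul_self_sqrt (hd y).le
  -- quadratic form expansion
  have expand : ∀ v : Fin n → ℝ, (∑ a, v a * ((normLap W).mulVec v a))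
      = (∑ a, v a * v a) - ∑ a, ∑ b, W a b * (v a / Real.sqrt (∑ z, W a z))
          * (v b / Real.sqrt (∑ z, W b z)) := by
    intro v
    have e1 : ∀ a, v a * ((normLap W).mulVec v a)
        = v a * v a - ∑ b, W a b * (v a / Real.sqrt (∑ z, W a z))
            * (v b / Real.sqrt (∑ z, W b z)) := by
      intro a
      simp only [Matrix.mulVec, dotProduct, normLap, Matrix.of_apply]
      rw [Finset.mul_sum]
      have e2 : ∀ b, v a * (((if a = b then (1:ℝ) else 0)
          - W a b / (Real.sqrt (∑ z, W a z) * Real.sqrt (∑ z, W b z))) * v b)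
          = (if a = b then v a * v b else 0)
            - W a b * (v a / Real.sqrt (∑ z, W a z)) * (v b / Real.sqrt (∑ z, W b z)) := by
        intro b
        by_cases hab : a = b <;> simp [hab] <;> ring
      rw [Finset.sum_congr rfl (fun b _ => e2 b), Finset.sum_sub_distrib]
      simp [Finset.sum_ite_eq]
    rw [Finset.sum_congr rfl (fun a _ => e1 a), Finset.sum_sub_distrib]
  -- eigenvalue bounds
  have hmub : ∀ i, 0 ≤ mu i ∧ mu i ≤ 2 := by
    intro i
    set f : Fin n → ℝ := fun a => g i a / Real.sqrt (∑ z, W a z) with hf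
    have hq : (∑ a, g i a * ((normLap W).mulVec (g i) a)) = mu i := by
      rw [heig i]
      have : ∀ a, g i a * ((mu i • g i) a) = mu i * (g i a * g i a) := by
        intro a; simp [Pi.smul_apply, smul_eq_mul]; ring
      rw [Finset.sum_congr rfl (fun a _ => this a), ← Finset.mul_sum, horth i i, if_pos rfl,
        mul_one]
    have hS : mu i = 1 - ∑ a, ∑ b, W a b * f a * f b := by
      rw [← hq, expand (g i), horth i i, if_pos rfl]
    -- diag sum equals 1
    have hT : (∑ a, ∑ b, W a b * f a * f a) = 1 := by
      have : ∀ a, (∑ b, W a b * f a * f a) = g i a * g i a := by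
        intro a
        rw [← Finset.sum_mul, ← Finset.sum_mul, mul_assoc]
        simp only [hf]
        rw [div_mul_div_comm, hsd2 a, mul_comm, div_mul_cancel₀ _ (hd a).ne']
      rw [Finset.sum_congr rfl (fun a _ => this a), horth i i, if_pos rfl]
    have hT' : (∑ a, ∑ b, W a b * f b * f b) = 1 := by
      rw [Finset.sum_comm]
      rw [← hT]
      apply Finset.sum_congr rfl; intro b _
      apply Finset.sum_congr rfl; intro a _
      rw [hsym a b]
    have comb : ∀ (F G H : Fin n → Fin n → ℝ),
        (∑ a, ∑ b, (F a b + G a b - 2 * H a b))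
          = (∑ a, ∑ b, F a b) + (∑ a, ∑ b, G a b) - 2 * (∑ a, ∑ b, H a b) := by
      intro F G H
      simp [Finset.sum_add_distrib, Finset.sum_sub_distrib, Finset.mul_sum]
    have hminus : (0:ℝ) ≤ 2 - 2 * ∑ a, ∑ b, W a b * f a * f b := by
      have nn : (0:ℝ) ≤ ∑ a, ∑ b, W a b * (f a - f b)^2 :=
        Finset.sum_nonneg fun a _ => Finset.sum_nonneg fun b _ =>
          mul_nonneg (hnn a b) (sq_nonneg _)
      have e : (∑ a, ∑ b, W a b * (f a - f b)^2)
          = 2 - 2 * ∑ a, ∑ b, W a b * f a * f b := by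
        have e0 : ∀ a b, W a b * (f a - f b)^2
            = W a b * f a * f a + W a b * f b * f b - 2 * (W a b * f a * f b) := by
          intro a b; ring
        rw [Finset.sum_congr rfl (fun a _ => Finset.sum_congr rfl (fun b _ => e0 a b)),
          comb, hT, hT']
        ring
      linarith [e ▸ nn]
    have hplus : (0:ℝ) ≤ 2 + 2 * ∑ a, ∑ b, W a b * f a * f b := by
      have nn : (0:ℝ) ≤ ∑ a, ∑ b, W a b * (f a + f b)^2 :=
        Finset.sum_nonneg fun a _ => Finset.sum_nonneg fun b _ =>
          mul_nonneg (hnn a b) (sq_nonneg _)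
      have e : (∑ a, ∑ b, W a b * (f a + f b)^2)
          = 2 + 2 * ∑ a, ∑ b, W a b * f a * f b := by
        have e0 : ∀ a b, W a b * (f a + f b)^2
            = W a b * f a * f a + W a b * f b * f b - 2 * (-(W a b * f a * f b)) := by
          intro a b; ring
        rw [Finset.sum_congr rfl (fun a _ => Finset.sum_congr rfl (fun b _ => e0 a b)),
          comb, hT, hT']
        have : (∑ a, ∑ b, -(W a b * f a * f b)) = - ∑ a, ∑ b, W a b * f a * f b := by
          simp [Finset.sum_neg_distrib]
        rw [this]
        ring
      linarith [e ▸ nn]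
    constructor
    · rw [hS]; linarith
    · rw [hS]; linarith
  -- matrix setup
  set G : Matrix (Fin n) (Fin n) ℝ := Matrix.of g with hG
  have hGram : G * G.transpose = 1 := by
    ext i j
    simp only [Matrix.mul_apply, Matrix.transpose_apply, Matrix.one_apply, hG, Matrix.of_apply]
    exact horth i j
  have hGram2 : G.transpose * G = 1 := mul_eq_one_comm.mp hGram
  set M : Matrix (Fin n) (Fin n) ℝ := Matrix.of (fun a b =>
    ((if a = b then (1:ℝ) else 0)
      + W a b / (Real.sqrt (∑ z, W a z) * Real.sqrt (∑ z, W b z))) / 2) with hMdef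
  have hM : M = 1 - (2⁻¹ : ℝ) • normLap W := by
    ext a b
    simp only [hMdef, Matrix.of_apply, Matrix.sub_apply, Matrix.smul_apply, Matrix.one_apply,
      normLap, smul_eq_mul]
    ring
  have hMg : ∀ i, M.mulVec (g i) = (1 - mu i / 2) • g i := by
    intro i
    rw [hM, Matrix.sub_mulVec, Matrix.one_mulVec, Matrix.smul_mulVec, heig i]
    funext a
    simp only [Pi.sub_apply, Pi.smul_apply, smul_eq_mul]
    ring
  set Λ : Matrix (Fin n) (Fin n) ℝ := Matrix.diagonal (fun i => 1 - mu i / 2) with hΛ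
  have hMG : M * G.transpose = G.transpose * Λ := by
    ext a j
    rw [hΛ, Matrix.mul_diagonal]
    have := congrFun (hMg j) a
    simp only [Matrix.mulVec, dotProduct, Pi.smul_apply, smul_eq_mul] at this
    simp only [Matrix.mul_apply, Matrix.transpose_apply, hG, Matrix.of_apply]
    rw [this]
    ring
  have hMspec : M = G.transpose * Λ * G := by
    calc M = M * (G.transpose * G) := by rw [hGram2, Matrix.mul_one]
    _ = (M * G.transpose) * G := by rw [Matrix.mul_assoc]
    _ = G.transpose * Λ * G := by rw [hMG]
  have hMpow : ∀ k : ℕ, M ^ k = G.transpose * Λ ^ k * G := by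
    intro k
    induction k with
    | zero => rw [pow_zero, pow_zero, Matrix.mul_one, hGram2]
    | succ k ih =>
      rw [pow_succ, ih, hMspec]
      calc G.transpose * Λ ^ k * G * (G.transpose * Λ * G)
          = G.transpose * Λ ^ k * (G * G.transpose) * Λ * G := by
            simp only [Matrix.mul_assoc]
        _ = G.transpose * Λ ^ (k+1) * G := by
            rw [hGram, Matrix.mul_one, pow_succ]
            simp only [Matrix.mul_assoc]
  have hdiagpow : (M ^ t) x x = ∑ i, (1 - mu i / 2) ^ t * (g i x) ^ 2 := by
    rw [hMpow t, hΛ, Matrix.diagonal_pow]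
    rw [Matrix.mul_apply]
    have e : ∀ i, (G.transpose * Matrix.diagonal ((fun i => 1 - mu i / 2) ^ t)) x i * G i x
        = (1 - mu i / 2) ^ t * (g i x) ^ 2 := by
      intro i
      rw [Matrix.mul_diagonal]
      simp only [Matrix.transpose_apply, hG, Matrix.of_apply, Pi.pow_apply]
      ring
    exact Finset.sum_congr rfl fun i _ => e i
  -- conjugation
  set Dinv : Matrix (Fin n) (Fin n) ℝ :=
    Matrix.diagonal (fun a => (Real.sqrt (∑ z, W a z))⁻¹) with hDinv
  set Dg : Matrix (Fin n) (Fin n) ℝ :=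
    Matrix.diagonal (fun a => Real.sqrt (∑ z, W a z)) with hDg
  have hDD : Dg * Dinv = 1 := by
    rw [hDg, hDinv, Matrix.diagonal_mul_diagonal]
    convert Matrix.diagonal_one with a
    exact mul_inv_cancel₀ (hsd a).ne'
  have hP : lazyP W = Dinv * M * Dg := by
    ext a b
    rw [Matrix.mul_assoc]
    rw [hDinv, Matrix.diagonal_mul, hDg, Matrix.mul_diagonal]
    simp only [hMdef, Matrix.of_apply, lazyP]
    by_cases hab : a = b
    · subst hab
      rw [hsd2 a, mul_comm, mul_assoc, mul_inv_cancel₀ (hsd a).ne', mul_one]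
    · have ha := (hsd a).ne'
      have hb := (hsd b).ne'
      have key : (Real.sqrt (∑ z, W a z))⁻¹ * ((W a b / (Real.sqrt (∑ z, W a z)
            * Real.sqrt (∑ z, W b z))) / 2 * Real.sqrt (∑ z, W b z))
          = W a b / (Real.sqrt (∑ z, W a z) * Real.sqrt (∑ z, W a z)) / 2 := by
        field_simp
      rw [if_neg hab, zero_add, zero_add, key, hsd2 a]
  have hPpow : ∀ k : ℕ, lazyP W ^ k = Dinv * M ^ k * Dg := by
    intro k
    induction k with
    | zero =>
      rw [pow_zero, pow_zero, Matrix.mul_one]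
      rw [hDinv, hDg, Matrix.diagonal_mul_diagonal]
      symm
      convert Matrix.diagonal_one with a
      exact inv_mul_cancel₀ (hsd a).ne'
    | succ k ih =>
      rw [pow_succ, ih, hP, pow_succ]
      calc Dinv * M ^ k * Dg * (Dinv * M * Dg)
          = Dinv * (M ^ k * ((Dg * Dinv) * (M * Dg))) := by simp only [Matrix.mul_assoc]
        _ = Dinv * (M ^ k * M) * Dg := by
            rw [hDD, Matrix.one_mul]
            simp only [Matrix.mul_assoc]
  have hPt : (lazyP W ^ t) x x = (M ^ t) x x := by
    rw [hPpow t, Matrix.mul_assoc, hDinv, Matrix.diagonal_mul, hDg, Matrix.mul_diagonal]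
    rw [mul_comm ((M ^ t) x x), ← mul_assoc, inv_mul_cancel₀ (hsd x).ne', one_mul]
  have hvol : (0:ℝ) < ∑ u, ∑ z, W u z := Finset.sum_pos (fun u _ => hd u) Finset.univ_nonempty
  have hpi : g 0 x ^ 2 = (∑ z, W x z) / (∑ u, ∑ z, W u z) := by
    rw [hg0 x, Real.sq_sqrt (div_nonneg (hd x).le hvol.le)]
  have main_eq : (lazyP W ^ t) x x - (∑ z, W x z) / (∑ u, ∑ z, W u z)
      = ∑ i ∈ Finset.univ.erase 0, (1 - mu i / 2) ^ t * g i x ^ 2 := by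
    rw [hPt, hdiagpow, ← Finset.add_sum_erase _ _ (Finset.mem_univ 0), hmu0, ← hpi]
    norm_num
  rw [main_eq]
  exact spectral_int t ht (fun i => g i x ^ 2) mu _ (fun i _ => sq_nonneg _)
    (fun i _ => (hmub i).1) (fun i _ => (hmub i).2) ψ ψ' hderiv hcont hψ0 hbound
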